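/- For every n ≥ 1 there exists an ordering T_1, T_2, ..., T_N of all ordered trees with exactly n vertices (N the number of such trees) such that for each i, T_{i+1} is obtained from T_i by deleting one leaf and appending one leaf elsewhere. -/

import Mathlib

/-- An ordered (plane) tree: a root together with the list of subtrees of its
children.  The children are listed **rightmost first** (so the head of the
list is the rightmost child). -/
inductive OTree : Type
  | node : List OTree → OTree

namespace OTree

-- Number of vertices of an ordered tree.
mutual
  def size : OTree → ℕ
    | .node ts => 1 + sizeAux ts
  def sizeAux : List OTree → ℕ
    | [] => 0
    | t :: ts => size t + sizeAux ts
end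

/-- `rpl T` is the number of edges of the rightmost path of `T`
(the path from the root that always follows the rightmost child). -/
def rpl : OTree → ℕ
  | .node [] => 0
  | .node (t :: _) => 1 + rpl t

/-- `p T` removes the rightmost leaf of `T` (the endpoint of the rightmost
path).  On the one-vertex tree it is the identity (junk value). -/
def p : OTree → OTree
  | .node [] => .node []
  | .node (.node [] :: ts) => .node ts
  | .node (.node (c :: cs) :: ts) => .node (p (.node (c :: cs)) :: ts)

/-- `C T i` appends a new leaf as the rightmost child of the vertex at
level `i` on the rightmost path of `T` (the root has level 1).
Junk values are returned when `i = 0` or `i` exceeds `rpl T + 1`. -/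
def C : OTree → ℕ → OTree
  | t, 0 => t
  | .node ts, 1 => .node (.node [] :: ts)
  | .node [], _ + 2 => .node []
  | .node (t :: ts), n + 2 => .node (C t (n + 1) :: ts)

/-- The number of children of the parent of the rightmost leaf
(junk value `0` on the one-vertex tree, which has no such parent). -/
def rmlParentDeg : OTree → ℕ
  | .node [] => 0
  | .node (.node [] :: ts) => ts.length + 1
  | .node (.node (c :: cs) :: _) => rmlParentDeg (.node (c :: cs))

/-- `T` has the pony-tail if the rightmost child of the root has exactly one
child, which is a leaf. -/
def ponyTail : OTree → Prop
  | .node (.node [.node []] :: _) => True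
  | _ => False

end OTree

/-- `AppendLeaf T T'` holds when `T'` is obtained from `T` by attaching one
new leaf to some vertex of `T`, at some position among its children. -/
inductive AppendLeaf : OTree → OTree → Prop
  | root (l r : List OTree) :
      AppendLeaf (.node (l ++ r)) (.node (l ++ OTree.node [] :: r))
  | child (l r : List OTree) (t t' : OTree) :
      AppendLeaf t t' → AppendLeaf (.node (l ++ t :: r)) (.node (l ++ t' :: r))

/-- `DelApp T T'` holds when `T'` can be obtained from `T` by deleting one
leaf and then appending one new leaf somewhere (delete-and-append a leaf). -/
def DelApp (T T' : OTree) : Prop :=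
  ∃ S : OTree, AppendLeaf S T ∧ AppendLeaf S T'

/-- `CopyingAt T T' j` : `T` is copying `T'` at level `j`, i.e. `T'` is
obtained from `T` by appending a new leaf which becomes the rightmost leaf of
`T'` (namely forming `C T j`, whose rightmost path has `j` edges) and then
removing some other leaf. -/
def CopyingAt (T T' : OTree) (j : ℕ) : Prop :=
  T ≠ T' ∧ 1 ≤ j ∧ j ≤ T.rpl + 1 ∧ T'.rpl = j ∧ AppendLeaf T' (T.C j)

/-- `T` is copying `T'`. -/
def Copying (T T' : OTree) : Prop := ∃ j : ℕ, CopyingAt T T' j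


namespace OTree

lemma sizeAux_nil : sizeAux [] = 0 := rfl
lemma sizeAux_cons (t : OTree) (ts : List OTree) :
    sizeAux (t :: ts) = size t + sizeAux ts := rfl
lemma size_node (ts : List OTree) : size (node ts) = 1 + sizeAux ts := by rw [size]

lemma one_le_size (T : OTree) : 1 ≤ size T := by
  cases T with
  | node ts => rw [size_node]; omega

lemma size_eq_one {T : OTree} (h : T.size = 1) : T = node [] := by
  cases T with
  | node ts =>
    cases ts with
    | nil => rfl
    | cons t ts =>
      exfalso
      have h1 := one_le_size t
      rw [size_node, sizeAux_cons] at h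
      omega

lemma rpl_nil : rpl (node []) = 0 := rfl
lemma rpl_cons (t : OTree) (ts : List OTree) : rpl (node (t :: ts)) = 1 + rpl t := rfl

lemma rpl_eq_zero {T : OTree} (h : rpl T = 0) : T = node [] := by
  cases T with
  | node ts =>
    cases ts with
    | nil => rfl
    | cons t ts => rw [rpl_cons] at h; omega

lemma one_le_rpl_of_size {T : OTree} (h : 2 ≤ size T) : 1 ≤ rpl T := by
  by_contra hc
  have h0 : rpl T = 0 := by omega
  rw [rpl_eq_zero h0, size_node, sizeAux_nil] at h
  omega

lemma C_one (ts : List OTree) : C (node ts) 1 = node (node [] :: ts) := by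
  cases ts <;> rfl
lemma C_two (t : OTree) (ts : List OTree) (n : ℕ) :
    C (node (t :: ts)) (n+2) = node (C t (n+1) :: ts) := rfl
lemma p_one (ts : List OTree) : p (node (node [] :: ts)) = node ts := rfl
lemma p_two (c : OTree) (cs ts : List OTree) :
    p (node (node (c::cs) :: ts)) = node (p (node (c::cs)) :: ts) := rfl

theorem appendLeaf_C : ∀ (j : ℕ) (T : OTree), 1 ≤ j → j ≤ rpl T + 1 → AppendLeaf T (C T j)
  | 1, node ts, _, _ => by
      rw [C_one]
      simpa using AppendLeaf.root [] ts
  | (k+2), node [], _, h2 => by rw [rpl_nil] at h2; omega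
  | (k+2), node (t :: ts), _, h2 => by
      rw [rpl_cons] at h2
      have ih := appendLeaf_C (k+1) t (by omega) (by omega)
      rw [C_two]
      simpa using AppendLeaf.child [] ts t (C t (k+1)) ih

theorem rpl_C : ∀ (j : ℕ) (T : OTree), 1 ≤ j → j ≤ rpl T + 1 → rpl (C T j) = j
  | 1, node ts, _, _ => by rw [C_one, rpl_cons, rpl_nil]
  | (k+2), node [], _, h2 => by rw [rpl_nil] at h2; omega
  | (k+2), node (t :: ts), _, h2 => by
      rw [rpl_cons] at h2
      have ih := rpl_C (k+1) t (by omega) (by omega)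
      rw [C_two, rpl_cons, ih]
      omega

theorem size_C : ∀ (j : ℕ) (T : OTree), 1 ≤ j → j ≤ rpl T + 1 → size (C T j) = size T + 1
  | 1, node ts, _, _ => by
      rw [C_one, size_node, size_node, sizeAux_cons, size_node, sizeAux_nil]
      omega
  | (k+2), node [], _, h2 => by rw [rpl_nil] at h2; omega
  | (k+2), node (t :: ts), _, h2 => by
      rw [rpl_cons] at h2
      have ih := size_C (k+1) t (by omega) (by omega)
      rw [C_two, size_node, size_node, sizeAux_cons, sizeAux_cons, ih]
      omega

theorem p_C : ∀ (j : ℕ) (T : OTree), 1 ≤ j → j ≤ rpl T + 1 → p (C T j) = T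
  | 1, node ts, _, _ => by rw [C_one, p_one]
  | (k+2), node [], _, h2 => by rw [rpl_nil] at h2; omega
  | (k+2), node (t :: ts), _, h2 => by
      rw [rpl_cons] at h2
      have ih := p_C (k+1) t (by omega) (by omega)
      have hr : rpl (C t (k+1)) = k + 1 := rpl_C (k+1) t (by omega) (by omega)
      rw [C_two]
      cases hct : C t (k+1) with
      | node cs =>
        cases cs with
        | nil => rw [hct, rpl_nil] at hr; omega
        | cons c cs' =>
          rw [p_two, ← hct, ih]

theorem C_p : ∀ (t : OTree) (ts : List OTree),
    C (p (node (t :: ts))) (rpl (node (t :: ts))) = node (t :: ts)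
  | node [], ts => by
      rw [p_one]
      have h2 : rpl (node (node [] :: ts)) = 1 := by rw [rpl_cons, rpl_nil]
      rw [h2, C_one]
  | node (c :: cs), ts => by
      have ih := C_p c cs
      have h3 : 1 ≤ rpl (node (c :: cs)) := by rw [rpl_cons]; omega
      obtain ⟨k, hk⟩ : ∃ k, rpl (node (c :: cs)) = k + 1 :=
        ⟨rpl (node (c :: cs)) - 1, by omega⟩
      have h2 : rpl (node (node (c :: cs) :: ts)) = k + 2 := by
        rw [rpl_cons, hk]; omega
      rw [p_two, h2, C_two, ← hk, ih]

theorem rpl_p : ∀ (t : OTree) (ts : List OTree),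
    rpl (node (t :: ts)) ≤ rpl (p (node (t :: ts))) + 1
  | node [], ts => by
      rw [p_one, rpl_cons, rpl_nil]; omega
  | node (c :: cs), ts => by
      have ih := rpl_p c cs
      rw [p_two, rpl_cons ((node (c :: cs)).p) ts, rpl_cons (node (c :: cs)) ts]
      omega

theorem size_p : ∀ (t : OTree) (ts : List OTree),
    size (p (node (t :: ts))) + 1 = size (node (t :: ts))
  | node [], ts => by
      rw [p_one, size_node, size_node, sizeAux_cons, size_node, sizeAux_nil]
      omega
  | node (c :: cs), ts => by
      have ih := size_p c cs
      rw [p_two, size_node, size_node, sizeAux_cons, sizeAux_cons]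
      omega

end OTree
namespace OTree

theorem AL_C {S U : OTree} (h : AppendLeaf S U) :
    ∀ b : ℕ, 1 ≤ b → b ≤ rpl S + 1 → b ≤ rpl U + 1 → (b ≤ rpl U ∨ rpl S ≤ rpl U) →
    AppendLeaf (C S b) (C U b) := by
  induction h with
  | root l r =>
    intro b hb1 hbS hbU hside
    match b, hb1 with
    | 1, _ =>
      rw [C_one, C_one]
      have := AppendLeaf.root (node [] :: l) r
      simpa using this
    | (k+2), _ =>
      cases l with
      | cons t l' =>
        have e1 : t :: l' ++ r = t :: (l' ++ r) := by simp
        have e2 : t :: l' ++ node [] :: r = t :: (l' ++ node [] :: r) := by simp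
        rw [e1, e2, C_two, C_two]
        have := AppendLeaf.root (C t (k+1) :: l') r
        simpa using this
      | nil =>
        simp only [List.nil_append] at *
        -- U = node (node [] :: r), rpl U = 1, so k = 0 and rpl S = 1
        have hrU : rpl (node (node [] :: r)) = 1 := by rw [rpl_cons, rpl_nil]
        rw [hrU] at hbU hside
        have hk : k = 0 := by omega
        subst hk
        have hrS : rpl (node r) = 1 := by
          rcases hside with h' | h'
          · omega
          · have : 1 ≤ rpl (node r) := by omega
            omega
        -- r = node [] :: rt
        cases r with
        | nil => rw [rpl_nil] at hrS; omega
        | cons rh rt =>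
          rw [rpl_cons] at hrS
          have : rpl rh = 0 := by omega
          have hrh : rh = node [] := rpl_eq_zero this
          subst hrh
          rw [C_two, C_two, C_one]
          have := AppendLeaf.root [node [node []]] rt
          simpa using this
  | child l r t t' hin ih =>
    intro b hb1 hbS hbU hside
    match b, hb1 with
    | 1, _ =>
      rw [C_one, C_one]
      have := AppendLeaf.child (node [] :: l) r t t' hin
      simpa using this
    | (k+2), _ =>
      cases l with
      | cons s l' =>
        have e1 : s :: l' ++ t :: r = s :: (l' ++ t :: r) := by simp
        have e2 : s :: l' ++ t' :: r = s :: (l' ++ t' :: r) := by simp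
        rw [e1, e2, C_two, C_two]
        have := AppendLeaf.child (C s (k+1) :: l') r t t' hin
        simpa using this
      | nil =>
        simp only [List.nil_append] at *
        rw [rpl_cons t r] at hbS hside
        rw [rpl_cons t' r] at hbU hside
        rw [C_two, C_two]
        have harg : k + 1 ≤ rpl t' ∨ rpl t ≤ rpl t' := by omega
        have hal := ih (k+1) (by omega) (by omega) (by omega) harg
        have h2 := AppendLeaf.child ([] : List OTree) r (C t (k+1)) (C t' (k+1)) hal
        simpa using h2
end OTree
namespace OTree

lemma copy_CC (T : OTree) {x y : ℕ} (hy1 : 1 ≤ y) (hxy : y < x) (hx : x ≤ rpl T + 1) :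
    CopyingAt (C T x) (C T y) (rpl (C T y)) := by
  have hx1 : 1 ≤ x := by omega
  have hy : y ≤ rpl T + 1 := by omega
  have ry : rpl (C T y) = y := rpl_C y T hy1 hy
  have rx : rpl (C T x) = x := rpl_C x T hx1 hx
  rw [ry]
  refine ⟨?_, hy1, by omega, ry, ?_⟩
  · intro h
    rw [h, ry] at rx; omega
  · exact AL_C (appendLeaf_C x T hx1 hx) y hy1 hy (by omega) (Or.inl (by omega))

lemma copy_bdryF {T T' : OTree} (hc : CopyingAt T T' (rpl T')) {w : ℕ}
    (hw1 : 1 ≤ w) (hw : w ≤ rpl T' + 1) :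
    CopyingAt (C T (rpl T')) (C T' w) (rpl (C T' w)) := by
  obtain ⟨hne, he1, heM, -, hal⟩ := hc
  have rw1 : rpl (C T' w) = w := rpl_C w T' hw1 hw
  have re : rpl (C T (rpl T')) = rpl T' := rpl_C (rpl T') T he1 heM
  rw [rw1]
  refine ⟨?_, hw1, by omega, rw1, ?_⟩
  · intro h
    have hwe : rpl T' = w := by rw [← re, h, rw1]
    have hp1 : p (C T (rpl T')) = T := p_C (rpl T') T he1 heM
    have hp2 : p (C T' w) = T' := p_C w T' hw1 hw
    rw [h, hp2] at hp1
    exact hne hp1.symm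
  · exact AL_C hal w hw1 hw (by omega) (Or.inr (by omega))

lemma copy_bdryB {T T' : OTree} (hc : CopyingAt T' T (rpl T)) {x : ℕ}
    (hx1 : 1 ≤ x) (hx : x ≤ rpl T + 1) :
    CopyingAt (C T' (rpl T)) (C T x) (rpl (C T x)) := by
  obtain ⟨hne, hf1, hfM, -, hal⟩ := hc
  have rx : rpl (C T x) = x := rpl_C x T hx1 hx
  have rf : rpl (C T' (rpl T)) = rpl T := rpl_C (rpl T) T' hf1 hfM
  rw [rx]
  refine ⟨?_, hx1, by omega, rx, ?_⟩
  · intro h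
    have : rpl T = x := by rw [← rf, h, rx]
    have hp1 : p (C T' (rpl T)) = T' := p_C (rpl T) T' hf1 hfM
    have hp2 : p (C T x) = T := p_C x T hx1 hx
    rw [h, hp2] at hp1
    exact hne hp1.symm
  · exact AL_C hal x hx1 hx (by omega) (Or.inr (by omega))

lemma delApp_CC (T : OTree) {x y : ℕ} (hx1 : 1 ≤ x) (hx : x ≤ rpl T + 1)
    (hy1 : 1 ≤ y) (hy : y ≤ rpl T + 1) : DelApp (C T x) (C T y) :=
  ⟨T, appendLeaf_C x T hx1 hx, appendLeaf_C y T hy1 hy⟩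

lemma delApp_F {T T' : OTree} (hc : CopyingAt T T' (rpl T')) {w : ℕ}
    (hw1 : 1 ≤ w) (hw : w ≤ rpl T' + 1) : DelApp (C T (rpl T')) (C T' w) :=
  ⟨T', hc.2.2.2.2, appendLeaf_C w T' hw1 hw⟩

lemma delApp_B {T T' : OTree} (hc : CopyingAt T' T (rpl T)) {x : ℕ}
    (hx1 : 1 ≤ x) (hx : x ≤ rpl T + 1) : DelApp (C T x) (C T' (rpl T)) :=
  ⟨T, appendLeaf_C x T hx1 hx, hc.2.2.2.2⟩

/-- The certified chain structure ("Gray code with copying directions"). -/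
inductive GCh : Option ℕ → List OTree → Prop
  | nil (po : Option ℕ) : GCh po []
  | single (po : Option ℕ) (T : OTree) : GCh po [T]
  | consF {po : Option ℕ} {T T' : OTree} {L : List OTree}
      (hc : CopyingAt T T' (rpl T')) (hd : DelApp T T')
      (hpin : ∀ s, po = some s → s ≠ rpl T') (ht : GCh none (T' :: L)) :
      GCh po (T :: T' :: L)
  | consB {po : Option ℕ} {T T' : OTree} {L : List OTree}
      (hc : CopyingAt T' T (rpl T)) (hd : DelApp T T')
      (ht : GCh (some (rpl T)) (T' :: L)) : GCh po (T :: T' :: L)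

lemma GCh.chain' {po : Option ℕ} {L : List OTree} (h : GCh po L) : L.Chain' DelApp := by
  induction h with
  | nil => exact List.isChain_nil
  | single => exact List.isChain_singleton _
  | consF hc hd hpin ht iht => exact List.isChain_cons_cons.mpr ⟨hd, iht⟩
  | consB hc hd ht iht => exact List.isChain_cons_cons.mpr ⟨hd, iht⟩

/-- head level of a list of levels, with default. -/
def hdl (hz : ℕ) : List ℕ → ℕ
  | [] => hz
  | y :: _ => y

/-- the "forbidden pin" value for a block front. -/
def nul (hz mz : ℕ) : List ℕ → ℕ
  | [] => mz
  | y :: t => if hdl hz t < y then hdl hz t else 0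

lemma hdl_mem (hz : ℕ) (l : List ℕ) : hdl hz l = hz ∨ hdl hz l ∈ l := by
  cases l with
  | nil => left; rfl
  | cons y t => right; simp [hdl]

lemma glueFront (T : OTree) (hz mz : ℕ) (zs₀ : List OTree)
    (hzb1 : 1 ≤ hz) (hzb2 : hz ≤ rpl T + 1)
    (Hzs : ∀ q : Option ℕ, (∀ a, q = some a → a ≠ mz) → GCh q (C T hz :: zs₀)) :
    ∀ ys : List ℕ, (∀ y ∈ ys, 1 ≤ y ∧ y ≤ rpl T + 1) → (ys ++ [hz]).Nodup →
    (∀ u, ys.getLast? = some u → u < hz → u ≠ mz) →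
    ∀ q : Option ℕ, (∀ a, q = some a → a ≠ nul hz mz ys) →
    GCh q (ys.map (fun j => C T j) ++ (C T hz :: zs₀)) := by
  intro ys
  induction ys with
  | nil =>
    intro _ _ _ q hq
    simpa using Hzs q (by simpa [nul] using hq)
  | cons y t ih =>
    intro hb hnd hlast q hq
    -- the tail list has head C T (hdl hz t)
    obtain ⟨R, hR⟩ : ∃ R, t.map (fun j => C T j) ++ (C T hz :: zs₀) = C T (hdl hz t) :: R := by
      cases t with
      | nil => exact ⟨zs₀, by simp [hdl]⟩
      | cons y2 t2 => exact ⟨t2.map (fun j => C T j) ++ (C T hz :: zs₀), by simp [hdl]⟩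
    have hbt : ∀ y' ∈ t, 1 ≤ y' ∧ y' ≤ rpl T + 1 := fun y' hy' => hb y' (by simp [hy'])
    have hndt : (t ++ [hz]).Nodup := by
      have : ((y :: t) ++ [hz]).Nodup = (y :: (t ++ [hz])).Nodup := by simp
      rw [this] at hnd
      exact hnd.of_cons
    have hlastt : ∀ u, t.getLast? = some u → u < hz → u ≠ mz := by
      intro u hu
      apply hlast
      cases t with
      | nil => simp at hu
      | cons y2 t2 => rw [List.getLast?_cons_cons]; exact hu
    have hynot : y ∉ t ++ [hz] := by
      have : ((y :: t) ++ [hz]).Nodup = (y :: (t ++ [hz])).Nodup := by simp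
      rw [this] at hnd
      exact (List.nodup_cons.mp hnd).1
    have hyb := hb y (by simp)
    have hlam : 1 ≤ hdl hz t ∧ hdl hz t ≤ rpl T + 1 := by
      rcases hdl_mem hz t with h | h
      · rw [h]; exact ⟨hzb1, hzb2⟩
      · exact hbt _ h
    have hyne : y ≠ hdl hz t := by
      intro h
      rcases hdl_mem hz t with h' | h'
      · rw [h'] at h; exact hynot (by simp [h])
      · rw [← h] at h'; exact hynot (by simp [h'])
    rcases Nat.lt_or_ge (hdl hz t) y with hcase | hcase
    · -- decreasing step: consF
      have hIH := ih hbt hndt hlastt none (by simp)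
      rw [hR] at hIH
      rw [List.map_cons, List.cons_append, hR]
      refine GCh.consF ?_ ?_ ?_ hIH
      · exact copy_CC T hlam.1 hcase hyb.2
      · exact delApp_CC T hyb.1 hyb.2 hlam.1 hlam.2
      · intro s hs
        have := hq s hs
        rw [rpl_C _ _ hlam.1 hlam.2]
        simpa [nul, hcase] using this
    · -- increasing step: consB
      have hylam : y < hdl hz t := by omega
      have hIH := ih hbt hndt hlastt (some y) ?_
      · rw [hR] at hIH
        rw [List.map_cons, List.cons_append, hR]
        have hcopy := copy_CC T hyb.1 hylam hlam.2
        have hrw : rpl (C T y) = y := rpl_C y T hyb.1 hyb.2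
        refine GCh.consB ?_ ?_ ?_
        · rw [hrw] at hcopy; rw [hrw]; exact hcopy
        · exact delApp_CC T hyb.1 hyb.2 hlam.1 hlam.2
        · rw [hrw]; exact hIH
      · intro a ha
        cases ha
        cases t with
        | nil =>
          simp only [nul]
          exact hlast y (by simp) (by simpa [hdl] using hylam)
        | cons y2 t2 =>
          simp only [nul]
          split
          · intro h
            apply hynot
            rcases hdl_mem hz t2 with h' | h'
            · rw [h, h']; simp
            · rw [h]; exact List.mem_append.mpr (Or.inl (List.mem_cons_of_mem _ h'))
          · omega

end OTree
namespace OTree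

lemma buildBlock (T : OTree) (Ts' L'' : List OTree) (lastx mz : ℕ) (ys : List ℕ)
    (hl1 : 1 ≤ lastx) (hl2 : lastx ≤ rpl T + 1)
    (Hzs : ∀ q : Option ℕ, (∀ a, q = some a → a ≠ mz) → GCh q (C T lastx :: L''))
    (hperm : (ys ++ [lastx]).Perm (List.range' 1 (rpl T + 1)))
    (hlast : ∀ u, ys.getLast? = some u → u < lastx → u ≠ mz)
    (hmem'' : ∀ U, U ∈ L'' ↔ ∃ S ∈ Ts', ∃ j, 1 ≤ j ∧ j ≤ rpl S + 1 ∧ U = C S j)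
    (hnd'' : L''.Nodup) (hT : T ∉ Ts') :
    ∃ L' : List OTree, ∃ R : List OTree,
      (∀ U, U ∈ L' ↔ ∃ S ∈ T :: Ts', ∃ j, 1 ≤ j ∧ j ≤ rpl S + 1 ∧ U = C S j) ∧
      L'.Nodup ∧ L' = C T (hdl lastx ys) :: R ∧
      (∀ q : Option ℕ, (∀ a, q = some a → a ≠ nul lastx mz ys) → GCh q L') := by
  classical
  set seq := ys ++ [lastx] with hseq
  have hndr : (List.range' 1 (rpl T + 1)).Nodup := List.nodup_range' (s := 1) (n := rpl T + 1)
  have hndseq : seq.Nodup := hperm.nodup_iff.mpr hndr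
  have hseqb : ∀ j ∈ seq, 1 ≤ j ∧ j ≤ rpl T + 1 := by
    intro j hj
    have := hperm.mem_iff.mp hj
    rw [List.mem_range'_1] at this
    omega
  have hysb : ∀ y ∈ ys, 1 ≤ y ∧ y ≤ rpl T + 1 := by
    intro y hy; exact hseqb y (by rw [hseq]; exact List.mem_append_left _ hy)
  have hmapnd : (seq.map (fun j => C T j)).Nodup := by
    refine List.Nodup.map_on ?_ hndseq
    intro x hx y hy hxy
    have hxb := hseqb x hx
    have hyb := hseqb y hy
    have h1 : rpl (C T x) = x := rpl_C x T hxb.1 hxb.2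
    have h2 : rpl (C T y) = y := rpl_C y T hyb.1 hyb.2
    rw [← h1, ← h2, hxy]
  have hdisj : ∀ U ∈ seq.map (fun j => C T j), U ∉ L'' := by
    intro U hU hU'
    rw [List.mem_map] at hU
    obtain ⟨j, hj, rfl⟩ := hU
    have hjb := hseqb j hj
    obtain ⟨S, hS, j', hj'1, hj'2, hUeq⟩ := (hmem'' _).mp hU'
    have hp1 : p (C T j) = T := p_C j T hjb.1 hjb.2
    have hp2 : p (C S j') = S := p_C j' S hj'1 hj'2
    rw [hUeq, hp2] at hp1
    rw [hp1] at hS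
    exact hT hS
  refine ⟨seq.map (fun j => C T j) ++ L'', ?_, ?_, ?_, ?_, ?_⟩
  · exact (match ys with
      | [] => L''
      | y :: t => ((t ++ [lastx]).map (fun j => C T j) ++ L''))
  · intro U
    rw [List.mem_append, List.mem_map]
    constructor
    · rintro (⟨j, hj, rfl⟩ | hU)
      · have hjb := hseqb j hj
        exact ⟨T, by simp, j, hjb.1, hjb.2, rfl⟩
      · obtain ⟨S, hS, j, h1, h2, h3⟩ := (hmem'' U).mp hU
        exact ⟨S, by simp [hS], j, h1, h2, h3⟩
    · rintro ⟨S, hS, j, h1, h2, h3⟩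
      rcases List.mem_cons.mp hS with rfl | hS'
      · left
        refine ⟨j, ?_, h3.symm⟩
        rw [hperm.mem_iff, List.mem_range'_1]
        omega
      · right
        exact (hmem'' U).mpr ⟨S, hS', j, h1, h2, h3⟩
  · exact List.Nodup.append hmapnd hnd'' hdisj
  · cases ys with
    | nil => simp [hseq, hdl]
    | cons y t => simp [hseq, hdl]
  · intro q hq
    have := glueFront T lastx mz L'' hl1 hl2 Hzs ys hysb hndseq hlast q hq
    have heq : ys.map (fun j => C T j) ++ (C T lastx :: L'') =
        seq.map (fun j => C T j) ++ L'' := by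
      rw [hseq, List.map_append]
      simp
    rw [heq] at this
    exact this

end OTree
namespace OTree

lemma mem_of_getLast?' {l : List ℕ} {a : ℕ} (h : l.getLast? = some a) : a ∈ l := by
  obtain ⟨ys, rfl⟩ := List.getLast?_eq_some_iff.mp h; simp

lemma nul_cons (hz mz y : ℕ) (t : List ℕ) :
    nul hz mz (y :: t) = 0 ∨ nul hz mz (y :: t) < y := by
  simp only [nul]; split
  · right; assumption
  · left; rfl

theorem key {po : Option ℕ} {Ts : List OTree} (hg : GCh po Ts) :
    ∀ (T : OTree) (Ts'' : List OTree), Ts = T :: Ts'' → Ts.Nodup →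
    (∀ S ∈ Ts, 1 ≤ rpl S) →
    (∀ f, po = some f → 1 ≤ f ∧ f ≤ rpl T + 1) →
    ∀ av : ℕ, (po = none → av = 0 ∨ av + 1 ≤ rpl T) →
    ∃ (L' R : List OTree) (w v2 : ℕ),
      (∀ U, U ∈ L' ↔ ∃ S ∈ T :: Ts'', ∃ j, 1 ≤ j ∧ j ≤ rpl S + 1 ∧ U = C S j) ∧
      L'.Nodup ∧
      L' = C T w :: R ∧
      1 ≤ w ∧ w ≤ rpl T + 1 ∧
      (∀ f, po = some f → w = f) ∧
      (po = none → w ≠ av) ∧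
      (v2 = 0 ∨ v2 < w) ∧
      (∀ q : Option ℕ, (∀ a, q = some a → a ≠ v2) → GCh q L') := by
  induction hg with
  | nil po => intro T Ts'' heq; simp at heq
  | single po T0 =>
    intro T Ts'' heq hnd hr hpo av hav
    injection heq with h1 h2
    subst h1; subst h2
    have hr1 : 1 ≤ rpl T0 := hr T0 (by simp)
    set x1 := po.getD (rpl T0 + 1) with hx1def
    have hx1b : 1 ≤ x1 ∧ x1 ≤ rpl T0 + 1 := by
      cases po with
      | none => simp [hx1def]
      | some f => have := hpo f rfl; simpa [hx1def] using this
    have hx1pin : ∀ f, po = some f → x1 = f := by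
      intro f hf; rw [hx1def, hf]; rfl
    have hx1av : po = none → x1 ≠ av := by
      intro h
      have hx1 : x1 = rpl T0 + 1 := by rw [hx1def, h]; rfl
      rcases hav h with h0 | h1 <;> omega
    have hx1mem : x1 ∈ List.range' 1 (rpl T0 + 1) := by
      rw [List.mem_range'_1]; omega
    set rest := (List.range' 1 (rpl T0 + 1)).erase x1 with hrest
    have hpermc : List.Perm (List.range' 1 (rpl T0 + 1)) (x1 :: rest) := List.perm_cons_erase hx1mem
    have hrestlen : rest.length = rpl T0 := by
      rw [hrest, List.length_erase_of_mem hx1mem, List.length_range']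
      omega
    have hrne : rest ≠ [] := by
      intro h; rw [h] at hrestlen; simp at hrestlen; omega
    set lastx := rest.getLast hrne with hlastdef
    have hsplit : (x1 :: rest.dropLast) ++ [lastx] = x1 :: rest := by
      rw [List.cons_append, List.dropLast_concat_getLast hrne]
    have hlxmem : lastx ∈ rest := List.getLast_mem hrne
    have hlxb : 1 ≤ lastx ∧ lastx ≤ rpl T0 + 1 := by
      have h2 : lastx ∈ List.range' 1 (rpl T0 + 1) := List.erase_subset hlxmem
      rw [List.mem_range'_1] at h2; omega
    obtain ⟨L', R, hmem, hnd', hhead, hGC⟩ :=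
      buildBlock T0 [] [] lastx 0 (x1 :: rest.dropLast) hlxb.1 hlxb.2
        (fun q _ => GCh.single q _)
        (by rw [hsplit]; exact hpermc.symm)
        (by intro u hu _
            have hu' : u ∈ x1 :: rest.dropLast := mem_of_getLast?' hu
            have : 1 ≤ u := by
              rcases List.mem_cons.mp hu' with rfl | hu''
              · omega
              · have := List.erase_subset (List.dropLast_subset _ hu'')
                rw [List.mem_range'_1] at this; omega
            omega)
        (by intro U; simp)
        List.nodup_nil (by simp)
    refine ⟨L', R, x1, nul lastx 0 (x1 :: rest.dropLast), hmem, hnd', ?_, hx1b.1, hx1b.2,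
      hx1pin, hx1av, ?_, hGC⟩
    · simpa [hdl] using hhead
    · exact nul_cons _ _ _ _
  | @consF po T0 T0' L0 hc hd hpin ht IH =>
    intro T Ts'' heq hnd hr hpo av hav
    injection heq with h1 h2
    subst h1; subst h2
    have hr1 : 1 ≤ rpl T0 := hr T0 (by simp)
    have he1 : 1 ≤ rpl T0' := hc.2.1
    have heM : rpl T0' ≤ rpl T0 + 1 := hc.2.2.1
    -- choose the first element of the block
    set x1 := po.elim (if rpl T0' = rpl T0 + 1 then rpl T0 else rpl T0 + 1) id with hx1def
    have hx1pin : ∀ f, po = some f → x1 = f := by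
      intro f hf; rw [hx1def, hf]; rfl
    have hx1b : 1 ≤ x1 ∧ x1 ≤ rpl T0 + 1 := by
      cases po with
      | none => rw [hx1def]; simp only [Option.elim]; split <;> omega
      | some f => have := hpo f rfl; rw [hx1pin f rfl]; exact this
    have hx1e : x1 ≠ rpl T0' := by
      cases po with
      | none => rw [hx1def]; simp only [Option.elim]; split <;> omega
      | some f => rw [hx1pin f rfl]; exact hpin f rfl
    have hx1av : po = none → x1 ≠ av := by
      intro h
      have : x1 = if rpl T0' = rpl T0 + 1 then rpl T0 else rpl T0 + 1 := by
        rw [hx1def, h]; rfl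
      rcases hav h with h0 | h1 <;> (rw [this]; split <;> omega)
    -- choose the penultimate element
    set xpen := if rpl T0 = 1 then x1 else
      (if x1 ≠ 1 ∧ rpl T0' ≠ 1 then 1 else if x1 ≠ 2 ∧ rpl T0' ≠ 2 then 2 else 3) with hxpdef
    have hxpb : 1 ≤ xpen ∧ xpen ≤ rpl T0 + 1 ∧ (rpl T0 ≠ 1 → xpen ≠ x1 ∧ xpen ≠ rpl T0') := by
      rw [hxpdef]; split
      · exact ⟨hx1b.1, hx1b.2, fun h => absurd (by assumption) h⟩
      · split
        · refine ⟨by omega, by omega, fun _ => by omega⟩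
        · split
          · refine ⟨by omega, by omega, fun _ => by omega⟩
          · have h3 : 3 ≤ rpl T0 + 1 ∧ x1 ≠ 3 ∧ rpl T0' ≠ 3 := by omega
            refine ⟨by omega, by omega, fun _ => by omega⟩
    set av2 := if xpen < rpl T0' then xpen else 0 with hav2def
    -- recursive call
    obtain ⟨L'', R'', w'', v2'', hmem'', hnd'', hL''eq, hw''1, hw''2, _, hw''av, hv2''p, hGC''⟩ :=
      IH T0' L0 rfl hnd.of_cons (fun S hS => hr S (List.mem_cons_of_mem _ hS))
        (fun f hf => nomatch hf) av2
        (fun _ => by rw [hav2def]; split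
                     · right; omega
                     · left; rfl)
    have hw''ne : w'' ≠ av2 := hw''av rfl
    -- the boundary step
    have Hzs : ∀ q : Option ℕ, (∀ a, q = some a → a ≠ w'') →
        GCh q (C T0 (rpl T0') :: L'') := by
      intro q hq
      rw [hL''eq]
      refine GCh.consF (copy_bdryF hc hw''1 hw''2) (delApp_F hc hw''1 hw''2) ?_ ?_
      · intro s hs
        rw [rpl_C w'' T0' hw''1 hw''2]
        exact hq s hs
      · rw [← hL''eq]; exact hGC'' none (by simp)
    have hTnot : T0 ∉ T0' :: L0 := (List.nodup_cons.mp hnd).1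
    -- the block front
    by_cases hM : rpl T0 = 1
    · -- block of size 2 : ys = [x1]
      have hxpx1 : xpen = x1 := by rw [hxpdef, if_pos hM]
      obtain ⟨L', R, hmem, hnd', hhead, hGC⟩ :=
        buildBlock T0 (T0' :: L0) L'' (rpl T0') w'' [x1] he1 heM Hzs
          (by -- ([x1] ++ [rpl T0']) ~ range' 1 (rpl T0 + 1)
            have hcases : (x1 = 1 ∧ rpl T0' = 2) ∨ (x1 = 2 ∧ rpl T0' = 1) := by omega
            have hrange : List.range' 1 (rpl T0 + 1) = [1, 2] := by
              rw [hM]; rfl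
            rw [hrange]
            rcases hcases with ⟨hx, hy⟩ | ⟨hx, hy⟩ <;> rw [hx, hy]
            · exact List.Perm.refl _
            · exact List.Perm.swap 1 2 []
          )
          (by intro u hu hlt
              simp only [List.getLast?_singleton, Option.some.injEq] at hu
              subst hu
              intro hEq
              apply hw''ne
              rw [hav2def, hxpx1, if_pos hlt, hEq]
          )
          hmem'' hnd'' hTnot
      refine ⟨L', R, x1, nul (rpl T0') w'' [x1], hmem, hnd', ?_, hx1b.1, hx1b.2,
        hx1pin, hx1av, ?_, hGC⟩
      · simpa [hdl] using hhead
      · exact nul_cons _ _ _ _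
    · -- block of size ≥ 3
      have hxp := hxpb.2.2 hM
      have hxpmem : xpen ∈ List.range' 1 (rpl T0 + 1) := by
        rw [List.mem_range'_1]; omega
      have hemem : rpl T0' ∈ List.range' 1 (rpl T0 + 1) := by
        rw [List.mem_range'_1]; omega
      set E1 := (List.range' 1 (rpl T0 + 1)).erase x1 with hE1
      set E2 := E1.erase xpen with hE2
      set middle := E2.erase (rpl T0') with hmid
      have hx1mem' : x1 ∈ List.range' 1 (rpl T0 + 1) := by rw [List.mem_range'_1]; omega
      have p1 : List.Perm (List.range' 1 (rpl T0 + 1)) (x1 :: E1) := List.perm_cons_erase hx1mem'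
      have hxpE1 : xpen ∈ E1 := (List.mem_erase_of_ne hxp.1).mpr hxpmem
      have p2 : List.Perm E1 (xpen :: E2) := List.perm_cons_erase hxpE1
      have heE2 : rpl T0' ∈ E2 :=
        (List.mem_erase_of_ne hxp.2.symm).mpr ((List.mem_erase_of_ne hx1e.symm).mpr hemem)
      have p3 : List.Perm E2 (rpl T0' :: middle) := List.perm_cons_erase heE2
      have hpermtotal : List.Perm ((x1 :: (middle ++ [xpen])) ++ [rpl T0'])
          (List.range' 1 (rpl T0 + 1)) := by
        have h1 : ((x1 :: (middle ++ [xpen])) ++ [rpl T0']) =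
            x1 :: (middle ++ ([xpen] ++ [rpl T0'])) := by simp
        rw [h1]
        have h2 : List.Perm (middle ++ ([xpen] ++ [rpl T0'])) (xpen :: rpl T0' :: middle) := by
          have h3 := List.perm_append_comm (l₁ := middle) (l₂ := [xpen] ++ [rpl T0'])
          simpa using h3
        exact ((List.Perm.cons _ h2).trans
          ((List.Perm.cons _ (List.Perm.cons _ p3.symm)).trans
            ((List.Perm.cons _ p2.symm).trans p1.symm)))
      obtain ⟨L', R, hmem, hnd', hhead, hGC⟩ :=
        buildBlock T0 (T0' :: L0) L'' (rpl T0') w'' (x1 :: (middle ++ [xpen])) he1 heM Hzs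
          hpermtotal
          (by intro u hu hlt
              have hgl : (x1 :: (middle ++ [xpen])).getLast? = some xpen := by
                have he : x1 :: (middle ++ [xpen]) = (x1 :: middle) ++ [xpen] := by simp
                rw [he, List.getLast?_concat]
              rw [hgl] at hu
              injection hu with hu
              subst hu
              intro hEq
              apply hw''ne
              rw [hav2def, if_pos hlt, hEq])
          hmem'' hnd'' hTnot
      refine ⟨L', R, x1, nul (rpl T0') w'' (x1 :: (middle ++ [xpen])), hmem, hnd', ?_,
        hx1b.1, hx1b.2, hx1pin, hx1av, ?_, hGC⟩
      · simpa [hdl] using hhead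
      · exact nul_cons _ _ _ _
  | @consB po T0 T0' L0 hc hd ht IH =>
    intro T Ts'' heq hnd hr hpo av hav
    injection heq with h1 h2
    subst h1; subst h2
    have hr1 : 1 ≤ rpl T0 := hr T0 (by simp)
    have hfM : rpl T0 ≤ rpl T0' + 1 := hc.2.2.1
    obtain ⟨L'', R'', w'', v2'', hmem'', hnd'', hL''eq, hw''1, hw''2, hw''some, _, hv2''p, hGC''⟩ :=
      IH T0' L0 rfl hnd.of_cons (fun S hS => hr S (List.mem_cons_of_mem _ hS))
        (fun f hf => by injection hf with h; subst h; exact ⟨hr1, hfM⟩) 0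
        (fun h => nomatch h)
    have hwf : w'' = rpl T0 := hw''some (rpl T0) rfl
    set x1 := po.getD (rpl T0 + 1) with hx1def
    have hx1pin : ∀ f, po = some f → x1 = f := fun f hf => by rw [hx1def, hf]; rfl
    have hx1b : 1 ≤ x1 ∧ x1 ≤ rpl T0 + 1 := by
      cases po with
      | none => rw [hx1def]; simp only [Option.getD_none]; omega
      | some f => have := hpo f rfl; simpa [hx1def] using this
    have hx1av : po = none → x1 ≠ av := by
      intro h
      have hx1 : x1 = rpl T0 + 1 := by rw [hx1def, h]; rfl
      rcases hav h with h0 | h1 <;> omega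
    set xM := if x1 ≠ 1 ∧ v2'' ≠ 1 then 1 else if x1 ≠ 2 ∧ v2'' ≠ 2 then 2 else 3 with hxmdef
    have hv2w : v2'' = 0 ∨ v2'' < rpl T0 := by rw [← hwf]; exact hv2''p
    have hxmb : 1 ≤ xM ∧ xM ≤ rpl T0 + 1 ∧ xM ≠ x1 ∧ xM ≠ v2'' := by
      rw [hxmdef]; split
      · refine ⟨by omega, by omega, by omega, by omega⟩
      · split
        · refine ⟨by omega, by omega, by omega, by omega⟩
        · refine ⟨by omega, by omega, by omega, by omega⟩
    have Hzs : ∀ q : Option ℕ, (∀ a, q = some a → a ≠ (0:ℕ)) → GCh q (C T0 xM :: L'') := by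
      intro q _
      rw [hL''eq]
      have hcb := copy_bdryB hc hxmb.1 hxmb.2.1
      refine GCh.consB ?_ ?_ ?_
      · rw [hwf]; exact hcb
      · rw [hwf]; exact delApp_B hc hxmb.1 hxmb.2.1
      · rw [rpl_C xM T0 hxmb.1 hxmb.2.1, ← hL''eq]
        exact hGC'' (some xM) (fun a ha => by injection ha with h; subst h; exact hxmb.2.2.2)
    have hx1mem : x1 ∈ List.range' 1 (rpl T0 + 1) := by rw [List.mem_range'_1]; omega
    set E1 := (List.range' 1 (rpl T0 + 1)).erase x1 with hE1
    have p1 : List.Perm (List.range' 1 (rpl T0 + 1)) (x1 :: E1) := List.perm_cons_erase hx1mem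
    have hxmE1 : xM ∈ E1 := (List.mem_erase_of_ne hxmb.2.2.1).mpr
      (by rw [List.mem_range'_1]; omega)
    set middle := E1.erase xM with hmid
    have p2 : List.Perm E1 (xM :: middle) := List.perm_cons_erase hxmE1
    have hperm : List.Perm ((x1 :: middle) ++ [xM]) (List.range' 1 (rpl T0 + 1)) := by
      have h1 : (x1 :: middle) ++ [xM] = x1 :: (middle ++ [xM]) := by simp
      rw [h1]
      have h2 : List.Perm (middle ++ [xM]) (xM :: middle) := by
        have h3 := List.perm_append_comm (l₁ := middle) (l₂ := [xM])
        simpa using h3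
      exact ((List.Perm.cons _ h2).trans ((List.Perm.cons _ p2.symm).trans p1.symm))
    obtain ⟨L', R, hmem, hnd', hhead, hGC⟩ :=
      buildBlock T0 (T0' :: L0) L'' xM 0 (x1 :: middle) hxmb.1 hxmb.2.1 Hzs hperm
        (by intro u hu _
            have hu' : u ∈ x1 :: middle := mem_of_getLast?' hu
            have h1u : 1 ≤ u := by
              rcases List.mem_cons.mp hu' with rfl | hu''
              · omega
              · have h2u : u ∈ E1 := List.erase_subset hu''
                have h3u := List.erase_subset h2u
                rw [List.mem_range'_1] at h3u
                omega
            omega)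
        hmem'' hnd'' ((List.nodup_cons.mp hnd).1)
    refine ⟨L', R, x1, nul xM 0 (x1 :: middle), hmem, hnd', ?_, hx1b.1, hx1b.2,
      hx1pin, hx1av, ?_, hGC⟩
    · simpa [hdl] using hhead
    · exact nul_cons _ _ _ _
end OTree
namespace OTree

lemma sizeAux_eq_zero {ts : List OTree} (h : sizeAux ts = 0) : ts = [] := by
  cases ts with
  | nil => rfl
  | cons t ts' =>
    exfalso
    rw [sizeAux_cons] at h
    have := one_le_size t
    omega

lemma size_eq_two {T : OTree} (h : T.size = 2) : T = node [node []] := by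
  cases T with
  | node ts =>
    rw [size_node] at h
    cases ts with
    | nil => rw [sizeAux_nil] at h; omega
    | cons t ts' =>
      rw [sizeAux_cons] at h
      have h1 := one_le_size t
      have h2 : size t = 1 ∧ sizeAux ts' = 0 := by
        constructor <;> omega
      rw [size_eq_one h2.1, sizeAux_eq_zero h2.2]

lemma aux_levels : ∀ m : ℕ, ∃ L : List OTree,
    L.Nodup ∧ (∀ T : OTree, T ∈ L ↔ T.size = m + 2) ∧ GCh none L ∧ L ≠ [] := by
  intro m
  induction m with
  | zero =>
    refine ⟨[node [node []]], by simp, ?_, GCh.single none _, by simp⟩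
    intro T
    simp only [List.mem_singleton]
    constructor
    · rintro rfl
      rw [size_node, sizeAux_cons, size_node, sizeAux_nil]
    · exact size_eq_two
  | succ m ihm =>
    obtain ⟨L, hnd, hmem, hGCh, hne⟩ := ihm
    obtain ⟨T, Ts'', rfl⟩ : ∃ T Ts'', L = T :: Ts'' := by
      cases L with
      | nil => exact absurd rfl hne
      | cons a l => exact ⟨a, l, rfl⟩
    have hrpl : ∀ S ∈ T :: Ts'', 1 ≤ rpl S := by
      intro S hS
      have := (hmem S).mp hS
      exact one_le_rpl_of_size (by omega)
    obtain ⟨L', R, w, v2, hmem', hnd', hhead', _, _, _, _, _, hGC'⟩ :=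
      key hGCh T Ts'' rfl hnd hrpl (fun f hf => nomatch hf) 0
        (fun _ => Or.inl rfl)
    refine ⟨L', hnd', ?_, hGC' none (by simp), by rw [hhead']; simp⟩
    intro U
    rw [hmem' U]
    constructor
    · rintro ⟨S, hS, j, hj1, hj2, rfl⟩
      have hsz := (hmem S).mp hS
      rw [size_C j S hj1 hj2, hsz]
    · intro hU
      cases U with
      | node us =>
        cases us with
        | nil =>
          exfalso
          rw [size_node, sizeAux_nil] at hU
          omega
        | cons u us' =>
          refine ⟨p (node (u :: us')), ?_, rpl (node (u :: us')), ?_, ?_, (C_p u us').symm⟩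
          · rw [hmem]
            have := size_p u us'
            omega
          · rw [rpl_cons]; omega
          · exact rpl_p u us'

end OTree


/-- For every `n ≥ 1` there exists an ordering of all ordered trees with
exactly `n` vertices such that each tree is obtained from the preceding one by
deleting one leaf and appending one leaf elsewhere (a Gray code). -/
theorem stmt_19 (n : ℕ) (hn : 1 ≤ n) :
    ∃ l : List OTree, l.Nodup ∧ (∀ T : OTree, T ∈ l ↔ T.size = n) ∧
      l.Chain' DelApp := by
  rcases Nat.lt_or_ge n 2 with h2 | h2
  · have hn1 : n = 1 := by omega
    subst hn1
    refine ⟨[OTree.node []], by simp, ?_, List.isChain_singleton _⟩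
    intro T
    simp only [List.mem_singleton]
    constructor
    · rintro rfl; rfl
    · exact OTree.size_eq_one
  · obtain ⟨L, hnd, hmem, hGCh, _⟩ := OTree.aux_levels (n - 2)
    refine ⟨L, hnd, ?_, hGCh.chain'⟩
    intro T
    rw [hmem T]
    omega
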